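/- For every positive integer n, the number of sequences (q_l)_{l≥1} of nonnegative integers satisfying Σ_{l≥1} l·q_l ≤ n does not exceed (2e)ⁿ. -/

import Mathlib

open scoped ENNReal
open Nat

lemma prod_Ioc_id_eq_factorial (m : ℕ) : (∏ l ∈ Finset.Ioc 0 m, l) = m ! := by
  induction m with
  | zero => simp
  | succ k ih =>
    rw [Finset.prod_Ioc_succ_top (Nat.zero_le _), ih, Nat.factorial_succ]
    ring

lemma prod_shift_mul_factorial (n : ℕ) :
    (∏ l ∈ Finset.Icc 1 n, (n + l)) * n ! = (2 * n)! := by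
  have e1 : ∏ l ∈ Finset.Icc 1 n, (n + l) = ∏ l ∈ Finset.Ioc n (2 * n), l := by
    have hmap : Finset.Ioc n (2 * n) =
        Finset.map (addLeftEmbedding n) (Finset.Ioc 0 n) := by
      rw [Finset.map_add_left_Ioc]
      congr 1
      omega
    rw [hmap, Finset.prod_map]
    rw [show Finset.Icc 1 n = Finset.Ioc 0 n from rfl]
    rfl
  have e2 : (∏ l ∈ Finset.Ioc 0 n, l) * ∏ l ∈ Finset.Ioc n (2 * n), l =
      ∏ l ∈ Finset.Ioc 0 (2 * n), l :=
    Finset.prod_Ioc_consecutive _ (by omega) (by omega)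
  rw [e1, mul_comm, ← prod_Ioc_id_eq_factorial n, ← prod_Ioc_id_eq_factorial (2 * n)]
  exact e2

lemma prod_div_le_four_pow (n : ℕ) :
    (∏ l ∈ Finset.Icc 1 n, (n / l + 1)) ≤ 4 ^ n := by
  have key : (∏ l ∈ Finset.Icc 1 n, (n / l + 1)) * n ! * n ! ≤ (2 * n)! := by
    have h1 : (∏ l ∈ Finset.Icc 1 n, (n / l + 1)) * n ! =
        ∏ l ∈ Finset.Icc 1 n, ((n / l + 1) * l) := by
      rw [show n ! = ∏ l ∈ Finset.Icc 1 n, l by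
        rw [show Finset.Icc 1 n = Finset.Ioc 0 n from rfl, prod_Ioc_id_eq_factorial],
        ← Finset.prod_mul_distrib]
    have h2 : ∏ l ∈ Finset.Icc 1 n, ((n / l + 1) * l) ≤
        ∏ l ∈ Finset.Icc 1 n, (n + l) := by
      apply Finset.prod_le_prod'
      intro l hl
      have : n / l * l ≤ n := Nat.div_mul_le_self n l
      nlinarith [this]
    calc (∏ l ∈ Finset.Icc 1 n, (n / l + 1)) * n ! * n !
        = (∏ l ∈ Finset.Icc 1 n, ((n / l + 1) * l)) * n ! := by rw [h1]
      _ ≤ (∏ l ∈ Finset.Icc 1 n, (n + l)) * n ! := Nat.mul_le_mul_right _ h2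
      _ = (2 * n)! := prod_shift_mul_factorial n
  have hcf : (2 * n).choose n * n ! * n ! = (2 * n)! := by
    have := Nat.choose_mul_factorial_mul_factorial (show n ≤ 2 * n by omega)
    have h2n : 2 * n - n = n := by omega
    rw [h2n] at this
    linarith [this]
  have hc : (∏ l ∈ Finset.Icc 1 n, (n / l + 1)) ≤ (2 * n).choose n := by
    have hkey : (∏ l ∈ Finset.Icc 1 n, (n / l + 1)) * n ! * n ! ≤
        (2 * n).choose n * n ! * n ! := by rw [hcf]; exact key
    have hpos := n.factorial_pos
    exact Nat.le_of_mul_le_mul_right (Nat.le_of_mul_le_mul_right hkey hpos) hpos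
  have hch : (2 * n).choose n ≤ 4 ^ n := by
    have h := Nat.sum_range_choose (2 * n)
    have hmem : n ∈ Finset.range (2 * n + 1) := by simp; omega
    have hs := Finset.single_le_sum (f := fun i => (2 * n).choose i)
      (fun i _ => Nat.zero_le _) hmem
    rw [h] at hs
    calc (2 * n).choose n ≤ 2 ^ (2 * n) := hs
      _ = 4 ^ n := by rw [pow_mul]; norm_num
  exact hc.trans hch

/-- The number of sequences `(q_l)_{l ≥ 1}` of nonnegative integers with
`Σ_{l ≥ 1} l·q_l ≤ n` does not exceed `(2e)ⁿ`. (A sequence indexed by `l ≥ 1`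
is encoded as `q : ℕ → ℕ` with `q 0 = 0`; the `l = 0` term of the sum vanishes.) -/
theorem count_sequences_le (n : ℕ) (hn : 0 < n) :
    {q : ℕ → ℕ | q 0 = 0 ∧ (∑' l : ℕ, ((l * q l : ℕ) : ℝ≥0∞)) ≤ (n : ℝ≥0∞)}.encard ≤
      ENNReal.ofReal ((2 * Real.exp 1) ^ n) := by
  set S := {q : ℕ → ℕ | q 0 = 0 ∧ (∑' l : ℕ, ((l * q l : ℕ) : ℝ≥0∞)) ≤ (n : ℝ≥0∞)}
  have hterm : ∀ q ∈ S, ∀ l, l * q l ≤ n := by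
    intro q hq l
    have hle : ((l * q l : ℕ) : ℝ≥0∞) ≤ (n : ℝ≥0∞) :=
      le_trans (ENNReal.le_tsum l) hq.2
    exact_mod_cast hle
  have hzero : ∀ q ∈ S, ∀ l, n < l → q l = 0 := by
    intro q hq l hl
    by_contra h
    have h1 : 1 ≤ q l := Nat.one_le_iff_ne_zero.mpr h
    have := hterm q hq l
    nlinarith
  classical
  set T : Finset (∀ l ∈ Finset.Icc 1 n, ℕ) :=
    Finset.pi (Finset.Icc 1 n) (fun l => Finset.range (n / l + 1)) with hT
  set f : (ℕ → ℕ) → (∀ l ∈ Finset.Icc 1 n, ℕ) := fun q => fun l _ => q l with hf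
  have hmaps : ∀ q ∈ S, f q ∈ T := by
    intro q hq
    rw [hT, Finset.mem_pi]
    intro l hl
    rw [Finset.mem_range]
    rw [Finset.mem_Icc] at hl
    have h := hterm q hq l
    have hl1 : 0 < l := hl.1
    have hdiv : q l ≤ n / l :=
      (Nat.le_div_iff_mul_le hl1).mpr (by rw [mul_comm]; exact h)
    show q l < n / l + 1
    omega
  have hinj : Set.InjOn f S := by
    intro q hq q' hq' h
    funext l
    rcases Nat.lt_or_ge l 1 with h0 | h1
    · interval_cases l
      rw [hq.1, hq'.1]
    rcases le_or_gt l n with h2 | h2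
    · exact congrFun (congrFun h l) (Finset.mem_Icc.mpr ⟨h1, h2⟩)
    · rw [hzero q hq l h2, hzero q' hq' l h2]
  have hcard : S.encard ≤ (T.card : ℕ∞) := by
    rw [← hinj.encard_image]
    have hsub : f '' S ⊆ (T : Set _) := by
      rintro _ ⟨q, hq, rfl⟩
      exact hmaps q hq
    calc (f '' S).encard ≤ (T : Set _).encard := Set.encard_le_encard hsub
      _ = T.card := Set.encard_coe_eq_coe_finsetCard T
  have hTcard : T.card = ∏ l ∈ Finset.Icc 1 n, (n / l + 1) := by
    rw [hT, Finset.card_pi]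
    simp
  have h4 : T.card ≤ 4 ^ n := by rw [hTcard]; exact prod_div_le_four_pow n
  have hcard' : S.encard ≤ ((4 ^ n : ℕ) : ℕ∞) :=
    hcard.trans (by exact_mod_cast h4)
  calc (S.encard : ℝ≥0∞) ≤ ((4 ^ n : ℕ) : ℝ≥0∞) := by exact_mod_cast hcard'
    _ ≤ ENNReal.ofReal ((2 * Real.exp 1) ^ n) := by
        rw [show (((4 : ℕ) ^ n : ℕ) : ℝ≥0∞) = ENNReal.ofReal ((4 : ℝ) ^ n) by
          rw [← ENNReal.ofReal_natCast]
          norm_num]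
        apply ENNReal.ofReal_le_ofReal
        apply pow_le_pow_left₀ (by norm_num)
        nlinarith [Real.exp_one_gt_d9]
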